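/- Let u be a unit vector in ℂⁿ, let P(W) := u u* W + W u u* − u u* W u u* be the orthogonal projection onto the tangent space T_Z, and let T(W) := u u* W + W u u* − (3/2) u u* W u u*. With the weighted norm ‖W‖_o² := ‖W‖_F² + (tr W)², for every Hermitian matrix A one has: (i) ‖T(A)‖_o ≤ ‖P(A)‖_F, and (ii) ‖P(A)‖_F ≤ ‖P(A)‖_o ≤ √2 · ‖P(A)‖_F. -/

import Mathlib

open Matrix

/-- Squared Frobenius norm of a complex matrix. -/
def frobSq {n : ℕ} (M : Matrix (Fin n) (Fin n) ℂ) : ℝ :=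
  ∑ i, ∑ j, Complex.normSq (M i j)

/-- Squared weighted norm `‖W‖_o² = ‖W‖_F² + (tr W)²` (for Hermitian `W`,
whose trace is real). -/
noncomputable def normOSq {n : ℕ} (M : Matrix (Fin n) (Fin n) ℂ) : ℝ :=
  frobSq M + (M.trace.re) ^ 2

lemma vmv_mul {n : ℕ} (w v : Fin n → ℂ) (M : Matrix (Fin n) (Fin n) ℂ) :
    vecMulVec w v * M = vecMulVec w (v ᵥ* M) := by
  ext i j
  simp [mul_apply, vecMulVec_apply, vecMul, dotProduct, Finset.mul_sum, mul_assoc]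

lemma mul_vmv {n : ℕ} (M : Matrix (Fin n) (Fin n) ℂ) (w v : Fin n → ℂ) :
    M * vecMulVec w v = vecMulVec (M *ᵥ w) v := by
  ext i j
  simp [mul_apply, vecMulVec_apply, mulVec, dotProduct, Finset.sum_mul, mul_assoc]

lemma vmv_mul_vmv {n : ℕ} (w v w' v' : Fin n → ℂ) :
    vecMulVec w v * vecMulVec w' v' = (v ⬝ᵥ w') • vecMulVec w v' := by
  rw [vmv_mul]
  ext i j
  simp [vecMulVec_apply, vecMul, dotProduct, Finset.sum_mul, Finset.mul_sum]
  ring_nf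
  exact Finset.sum_congr rfl fun k _ => by ring

lemma trace_vmv {n : ℕ} (w v : Fin n → ℂ) : trace (vecMulVec w v) = w ⬝ᵥ v := by
  simp [trace, diag, vecMulVec_apply, dotProduct]

lemma frobSq_trace {n : ℕ} (M : Matrix (Fin n) (Fin n) ℂ) :
    frobSq M = (trace (Mᴴ * M)).re := by
  simp only [trace, diag, mul_apply, conjTranspose_apply, Complex.re_sum]
  rw [Finset.sum_comm]
  simp [frobSq, Complex.normSq_apply, Complex.mul_re]


/-- For a unit vector `u`, the orthogonal projection
`P(W) = u u* W + W u u* - u u* W u u*` and the weighted projection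
`T(W) = u u* W + W u u* - (3/2) u u* W u u*` satisfy, for every Hermitian `A`:
`‖T(A)‖_o ≤ ‖P(A)‖_F` and `‖P(A)‖_F ≤ ‖P(A)‖_o ≤ √2 ‖P(A)‖_F`. -/
theorem stmt4 {n : ℕ} (u : Fin n → ℂ) (hu : star u ⬝ᵥ u = 1)
    (A : Matrix (Fin n) (Fin n) ℂ) (hA : A.IsHermitian)
    (U P T : Matrix (Fin n) (Fin n) ℂ)
    (hU : U = vecMulVec u (star u))
    (hP : P = U * A + A * U - U * A * U)
    (hT : T = U * A + A * U - (3/2 : ℂ) • (U * A * U)) :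
    Real.sqrt (normOSq T) ≤ Real.sqrt (frobSq P) ∧
    Real.sqrt (frobSq P) ≤ Real.sqrt (normOSq P) ∧
    Real.sqrt (normOSq P) ≤ Real.sqrt 2 * Real.sqrt (frobSq P) := by
  set v : Fin n → ℂ := A *ᵥ u with hv
  set c : ℂ := star u ⬝ᵥ v with hcdef
  set tc : ℂ := star v ⬝ᵥ v with htcdef
  have hAH : Aᴴ = A := hA
  -- star v = star u ᵥ* A
  have hsv : star v = star u ᵥ* A := by
    rw [hv, star_mulVec, hAH]
  -- dot product facts
  have e1 : star u ⬝ᵥ u = 1 := hu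
  have e2 : star u ⬝ᵥ v = c := rfl
  have e3 : star v ⬝ᵥ u = c := by
    rw [hsv, ← dotProduct_mulVec, ← hv]
  have hc' : star c = c := by
    rw [hcdef, ← star_dotProduct_star, star_star]; exact e3
  have hc : (starRingEnd ℂ) c = c := hc'
  have e4 : star v ⬝ᵥ v = tc := rfl
  have e5 : u ⬝ᵥ star u = 1 := (dotProduct_comm u (star u)).trans hu
  have e6 : u ⬝ᵥ star v = c := (dotProduct_comm u (star v)).trans e3
  have e7 : v ⬝ᵥ star u = c := (dotProduct_comm v (star u)).trans e2
  have e8 : v ⬝ᵥ star v = tc := (dotProduct_comm v (star v)).trans e4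
  -- products with U
  have hUA : U * A = vecMulVec u (star v) := by rw [hU, vmv_mul, hsv]
  have hAU : A * U = vecMulVec v (star u) := by rw [hU, mul_vmv, hv]
  have hUAU : U * A * U = c • U := by
    rw [hUA, hU, vmv_mul_vmv, e3]
  -- explicit forms
  have hP' : P = vecMulVec u (star v) + vecMulVec v (star u)
      - c • vecMulVec u (star u) := by
    rw [hP, hUAU, hUA, hAU, hU]
  have hT' : T = vecMulVec u (star v) + vecMulVec v (star u)
      - ((3/2 : ℂ) * c) • vecMulVec u (star u) := by
    rw [hT, hUAU, hUA, hAU, hU, smul_smul]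
  -- traces
  have htrP : trace P = c := by
    rw [hP']
    simp [trace_add, trace_sub, trace_smul, trace_vmv, e5, e6, e7]
  have htrT : trace T = c / 2 := by
    rw [hT']
    simp [trace_add, trace_sub, trace_smul, trace_vmv, e5, e6, e7]
    ring
  -- Hermitian-ness
  have hvv : ∀ a b : Fin n → ℂ, (vecMulVec a (star b))ᴴ = vecMulVec b (star a) := by
    intro a b; ext i j; simp [conjTranspose_apply, vecMulVec_apply, mul_comm]
  have h32 : star ((3/2 : ℂ) * c) = (3/2 : ℂ) * c := by
    rw [star_mul', hc']
    norm_num [Complex.ext_iff]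
  have hPH : Pᴴ = P := by
    rw [hP']
    simp only [conjTranspose_sub, conjTranspose_add, conjTranspose_smul]
    rw [hvv, hvv, hvv, hc']
    abel
  have hTH : Tᴴ = T := by
    rw [hT']
    simp only [conjTranspose_sub, conjTranspose_add, conjTranspose_smul]
    rw [hvv, hvv, hvv, h32]
    abel
  -- trace of squares
  have htrPP : trace (P * P) = 2 * tc - c ^ 2 := by
    rw [hP']
    simp only [sub_mul, mul_sub, add_mul, mul_add, smul_mul_assoc, mul_smul_comm,
      vmv_mul_vmv, trace_add, trace_sub, trace_smul, trace_vmv, smul_smul,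
      e1, e2, e3, e4, e5, e6, e7, e8, smul_eq_mul]
    ring
  have htrTT : trace (T * T) = 2 * tc - (7/4 : ℂ) * c ^ 2 := by
    rw [hT']
    simp only [sub_mul, mul_sub, add_mul, mul_add, smul_mul_assoc, mul_smul_comm,
      vmv_mul_vmv, trace_add, trace_sub, trace_smul, trace_vmv, smul_smul,
      e1, e2, e3, e4, e5, e6, e7, e8, smul_eq_mul]
    ring
  -- real quantities
  set t : ℝ := tc.re with htdef
  set cr : ℝ := c.re with hcrdef
  have hcre : c = (cr : ℂ) := (Complex.conj_eq_iff_re.mp hc).symm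
  have hfP : frobSq P = 2 * t - cr ^ 2 := by
    rw [frobSq_trace, hPH, htrPP, hcre, ← Complex.ofReal_pow]
    simp [Complex.sub_re, Complex.mul_re, ← Complex.ofReal_pow]
    rfl
  have hfT : frobSq T = 2 * t - (7/4) * cr ^ 2 := by
    rw [frobSq_trace, hTH, htrTT, hcre, ← Complex.ofReal_pow]
    simp [Complex.sub_re, Complex.mul_re, ← Complex.ofReal_pow]
    rfl
  -- Cauchy-Schwarz: cr^2 ≤ t
  have ht : cr ^ 2 ≤ t := by
    set w : Fin n → ℂ := v - c • u with hwdef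
    have hw : star w ⬝ᵥ w = tc - c ^ 2 := by
      rw [hwdef]
      simp only [star_sub, star_smul, sub_dotProduct, dotProduct_sub,
        smul_dotProduct, dotProduct_smul, e1, e2, e3, e4, smul_eq_mul, hc']
      ring
    have hge : 0 ≤ (star w ⬝ᵥ w).re := by
      have : (star w ⬝ᵥ w).re = ∑ i, Complex.normSq (w i) := by
        simp only [dotProduct, Pi.star_apply, Complex.re_sum]
        refine Finset.sum_congr rfl fun i _ => ?_
        rw [show star (w i) = (starRingEnd ℂ) (w i) from rfl,
          ← Complex.normSq_eq_conj_mul_self, Complex.ofReal_re]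
      rw [this]
      exact Finset.sum_nonneg fun i _ => Complex.normSq_nonneg _
    rw [hw] at hge
    have h2 : (tc - c ^ 2).re = t - cr ^ 2 := by
      rw [hcre, ← Complex.ofReal_pow]
      simp [Complex.sub_re, ← Complex.ofReal_pow]
      rfl
    rw [h2] at hge
    linarith
  have hnP : normOSq P = 2 * t := by
    rw [normOSq, hfP, htrP, hcre]
    simp
  have hnT : normOSq T = 2 * t - (3/2) * cr ^ 2 := by
    rw [normOSq, hfT, htrT, hcre,
      show ((cr : ℂ)/2) = (((cr/2 : ℝ)) : ℂ) by push_cast; ring, Complex.ofReal_re]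
    ring
  refine ⟨?_, ?_, ?_⟩
  · apply Real.sqrt_le_sqrt
    rw [hnT, hfP]; nlinarith [sq_nonneg cr]
  · apply Real.sqrt_le_sqrt
    rw [hnP, hfP]; nlinarith [sq_nonneg cr]
  · rw [← Real.sqrt_mul (by norm_num : (0:ℝ) ≤ 2)]
    apply Real.sqrt_le_sqrt
    rw [hnP, hfP]; nlinarith
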